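/- For all real x, y with |x| < 1/4, |y| < 1/4 and x ≠ y, the double series Σ_{r,s ≥ 1} (−1)^{r+s−1} C_{r+s−1} x^r y^s converges absolutely and equals 1/2 + (y·√(1+4x) − x·√(1+4y)) / (2(x−y)). -/

import Mathlib

open Finset

/-- Catalan numbers are at most `4 ^ n`. -/
lemma my_catalan_le_four_pow (n : ℕ) : catalan n ≤ 4 ^ n := by
  have h1 : catalan n ≤ Nat.centralBinom n := by
    calc catalan n ≤ (n + 1) * catalan n := Nat.le_mul_of_pos_left _ (Nat.succ_pos n)
      _ = Nat.centralBinom n := succ_mul_catalan_eq_centralBinom n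
  refine h1.trans ?_
  have h2 : Nat.centralBinom n ≤ ∑ m ∈ range (2 * n + 1), (2 * n).choose m :=
    Finset.single_le_sum (f := fun m => (2 * n).choose m) (fun i _ => Nat.zero_le _)
      (by simp [Nat.lt_succ_iff]; omega)
  rw [Nat.sum_range_choose] at h2
  calc Nat.centralBinom n ≤ 2 ^ (2 * n) := h2
    _ = 4 ^ n := by rw [pow_mul]; norm_num

/-- The generating function of the Catalan numbers. -/
noncomputable def catGF (t : ℝ) : ℝ := ∑' n : ℕ, (catalan n : ℝ) * t ^ n

lemma my_summable_abs {t : ℝ} (ht : |t| < 1 / 4) :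
    Summable (fun n : ℕ => |(catalan n : ℝ) * t ^ n|) := by
  have h4t : (0:ℝ) ≤ 4 * |t| := by positivity
  refine Summable.of_nonneg_of_le (fun n => abs_nonneg _)
    (fun n => ?_) (summable_geometric_of_lt_one h4t (by linarith))
  rw [abs_mul, abs_pow, Nat.abs_cast]
  have : ((catalan n : ℝ)) ≤ 4 ^ n := by
    exact_mod_cast Nat.cast_le.mpr (my_catalan_le_four_pow n)
  calc (catalan n : ℝ) * |t| ^ n ≤ 4 ^ n * |t| ^ n := by
        exact mul_le_mul_of_nonneg_right this (by positivity)
    _ = (4 * |t|) ^ n := by rw [mul_pow]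

lemma my_summable {t : ℝ} (ht : |t| < 1 / 4) :
    Summable (fun n : ℕ => (catalan n : ℝ) * t ^ n) :=
  (my_summable_abs ht).of_abs

/-- Partial sums of `catalan n / 4 ^ n`. -/
lemma my_partial_sum (N : ℕ) :
    ∑ n ∈ range N, (catalan n : ℝ) * (1 / 4) ^ n
      = 2 - 2 * (Nat.centralBinom N : ℝ) / 4 ^ N := by
  induction N with
  | zero => simp [Nat.centralBinom_zero]
  | succ N ih =>
    rw [Finset.sum_range_succ, ih]
    have hN1 : ((N:ℝ) + 1) ≠ 0 := by positivity
    have hcb : (Nat.centralBinom (N + 1) : ℝ)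
        = 2 * (2 * N + 1) * (Nat.centralBinom N : ℝ) / (N + 1) := by
      rw [eq_div_iff hN1, mul_comm]
      exact_mod_cast congrArg (Nat.cast (R := ℝ)) (Nat.succ_mul_centralBinom_succ N)
    have hcat : (catalan N : ℝ) = (Nat.centralBinom N : ℝ) / (N + 1) := by
      rw [eq_div_iff hN1, mul_comm]
      exact_mod_cast congrArg (Nat.cast (R := ℝ)) (succ_mul_catalan_eq_centralBinom N)
    have hN4 : (4:ℝ) ^ N ≠ 0 := by positivity
    have h14 : ((1:ℝ) / 4) ^ N = (4 ^ N)⁻¹ := by rw [one_div, inv_pow]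
    rw [hcb, hcat, h14, pow_succ]
    field_simp
    ring

lemma my_tsum_le_two {t : ℝ} (ht : |t| < 1 / 4) :
    ∑' n : ℕ, (catalan n : ℝ) * |t| ^ n ≤ 2 := by
  have habs : Summable (fun n : ℕ => (catalan n : ℝ) * |t| ^ n) := by
    have := my_summable (t := |t|) (by rwa [abs_abs])
    exact this
  refine Summable.tsum_le_of_sum_range_le habs (fun N => ?_)
  calc ∑ n ∈ range N, (catalan n : ℝ) * |t| ^ n
      ≤ ∑ n ∈ range N, (catalan n : ℝ) * (1 / 4) ^ n := by
        refine Finset.sum_le_sum (fun i _ => ?_)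
        exact mul_le_mul_of_nonneg_left (pow_le_pow_left₀ (abs_nonneg t) (by linarith) i)
          (by positivity)
    _ = 2 - 2 * (Nat.centralBinom N : ℝ) / 4 ^ N := my_partial_sum N
    _ ≤ 2 := by
        have : (0:ℝ) ≤ 2 * (Nat.centralBinom N : ℝ) / 4 ^ N := by positivity
        linarith

lemma my_abs_catGF_le_two {t : ℝ} (ht : |t| < 1 / 4) : |catGF t| ≤ 2 := by
  have hnorm : Summable (fun n : ℕ => ‖(catalan n : ℝ) * t ^ n‖) := by
    simpa only [Real.norm_eq_abs] using my_summable_abs ht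
  have h1 : ‖catGF t‖ ≤ ∑' n : ℕ, ‖(catalan n : ℝ) * t ^ n‖ :=
    norm_tsum_le_tsum_norm hnorm
  rw [Real.norm_eq_abs] at h1
  refine h1.trans ?_
  have h2 : ∀ n : ℕ, ‖(catalan n : ℝ) * t ^ n‖ = (catalan n : ℝ) * |t| ^ n := by
    intro n; rw [Real.norm_eq_abs, abs_mul, abs_pow, Nat.abs_cast]
  rw [tsum_congr h2]
  exact my_tsum_le_two ht

/-- Functional equation: `catGF t = 1 + t * (catGF t)^2`. -/
lemma my_catGF_eq {t : ℝ} (ht : |t| < 1 / 4) :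
    catGF t = 1 + t * (catGF t * catGF t) := by
  have hs := my_summable ht
  have hnorm : Summable (fun n : ℕ => ‖(catalan n : ℝ) * t ^ n‖) := my_summable_abs ht
  have hcauchy : catGF t * catGF t
      = ∑' n : ℕ, ∑ kl ∈ antidiagonal n,
          ((catalan kl.1 : ℝ) * t ^ kl.1) * ((catalan kl.2 : ℝ) * t ^ kl.2) :=
    tsum_mul_tsum_eq_tsum_sum_antidiagonal_of_summable_norm hnorm hnorm
  have hinner : ∀ n : ℕ, ∑ kl ∈ antidiagonal n,
      ((catalan kl.1 : ℝ) * t ^ kl.1) * ((catalan kl.2 : ℝ) * t ^ kl.2)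
      = (catalan (n + 1) : ℝ) * t ^ n := by
    intro n
    have : ∀ kl ∈ antidiagonal n,
        ((catalan kl.1 : ℝ) * t ^ kl.1) * ((catalan kl.2 : ℝ) * t ^ kl.2)
        = ((catalan kl.1 : ℝ) * (catalan kl.2 : ℝ)) * t ^ n := by
      intro kl hkl
      rw [Finset.HasAntidiagonal.mem_antidiagonal] at hkl
      rw [← hkl, pow_add]; ring
    rw [Finset.sum_congr rfl this, ← Finset.sum_mul]
    congr 1
    rw [catalan_succ']
    push_cast
    rfl
  have hshift : catGF t = 1 + ∑' n : ℕ, (catalan (n + 1) : ℝ) * t ^ (n + 1) := by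
    have := Summable.tsum_eq_zero_add hs
    simpa [catGF] using this
  rw [hcauchy, tsum_congr hinner]
  rw [← tsum_mul_left]
  have : ∀ n : ℕ, t * ((catalan (n + 1) : ℝ) * t ^ n) = (catalan (n + 1) : ℝ) * t ^ (n + 1) := by
    intro n; ring
  rw [tsum_congr this, ← hshift]

/-- Key closed form: `√(1 - 4t) = 1 - 2t · catGF t` for `|t| < 1/4`. -/
lemma my_sqrt_eq {t : ℝ} (ht : |t| < 1 / 4) :
    Real.sqrt (1 - 4 * t) = 1 - 2 * t * catGF t := by
  have hg := my_catGF_eq ht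
  have hb := my_abs_catGF_le_two ht
  have hnn : 0 ≤ 1 - 2 * t * catGF t := by
    have h1 : 2 * t * catGF t ≤ |2 * t * catGF t| := le_abs_self _
    have h2 : |2 * t * catGF t| = 2 * |t| * |catGF t| := by
      rw [abs_mul, abs_mul]; simp [abs_of_nonneg]
    nlinarith [abs_nonneg t, abs_nonneg (catGF t)]
  have hsq : 1 - 4 * t = (1 - 2 * t * catGF t) ^ 2 := by
    linear_combination (4 * t) * hg
  rw [hsq, Real.sqrt_sq hnn]

lemma my_tail_sum {u : ℝ} (hu : |u| < 1 / 4) :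
    ∑' n : ℕ, (catalan (n + 1) : ℝ) * u ^ (n + 1) = catGF u - 1 := by
  have hs := my_summable hu
  have := Summable.tsum_eq_zero_add hs
  simp only [catalan_zero, Nat.cast_one, pow_zero, one_mul] at this
  rw [catGF, this]; ring

lemma my_summable_shift {u : ℝ} (hu : |u| < 1 / 4) :
    Summable (fun n : ℕ => (catalan (n + 1) : ℝ) * u ^ (n + 1)) :=
  (my_summable hu).comp_injective (add_left_injective 1)

/-- Sum over `ℕ × ℕ` equals the sum over antidiagonals. -/
lemma my_tsum_prod_eq (F : ℕ × ℕ → ℝ) (hF : Summable F) :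
    ∑' rs : ℕ × ℕ, F rs = ∑' n : ℕ, ∑ kl ∈ antidiagonal n, F kl := by
  conv_rhs => congr; ext; rw [← Finset.sum_finset_coe, ← tsum_fintype (L := SummationFilter.unconditional _)]
  rw [← Finset.HasAntidiagonal.sigmaAntidiagonalEquivProd.tsum_eq F]
  exact Summable.tsum_sigma' (fun n => (hasSum_fintype _).summable)
    (Finset.HasAntidiagonal.sigmaAntidiagonalEquivProd.summable_iff.mpr hF)

set_option maxHeartbeats 2000000 in
theorem stmt13 (x y : ℝ) (hx : |x| < 1 / 4) (hy : |y| < 1 / 4) (hxy : x ≠ y) :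
    Summable (fun rs : ℕ × ℕ =>
      |(-1 : ℝ) ^ (rs.1 + rs.2 + 1) * (catalan (rs.1 + rs.2 + 1) : ℝ) *
        x ^ (rs.1 + 1) * y ^ (rs.2 + 1)|) ∧
    (∑' rs : ℕ × ℕ, (-1 : ℝ) ^ (rs.1 + rs.2 + 1) * (catalan (rs.1 + rs.2 + 1) : ℝ) *
        x ^ (rs.1 + 1) * y ^ (rs.2 + 1)) =
      1 / 2 + (y * Real.sqrt (1 + 4 * x) - x * Real.sqrt (1 + 4 * y)) / (2 * (x - y)) := by
  have hxy' : x - y ≠ 0 := sub_ne_zero.mpr hxy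
  set F : ℕ × ℕ → ℝ := fun rs =>
    (-1 : ℝ) ^ (rs.1 + rs.2 + 1) * (catalan (rs.1 + rs.2 + 1) : ℝ) *
      x ^ (rs.1 + 1) * y ^ (rs.2 + 1) with hF
  have h0x : (0:ℝ) ≤ 4 * |x| := by positivity
  have h0y : (0:ℝ) ≤ 4 * |y| := by positivity
  have hgx : Summable (fun r : ℕ => ‖(4 * |x|) ^ (r + 1)‖) := by
    have h1 : Summable (fun r : ℕ => (4 * |x|) ^ (r + 1)) :=
      (summable_geometric_of_lt_one h0x (by linarith)).comp_injective (add_left_injective 1)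
    simpa only [Real.norm_eq_abs, abs_pow, abs_of_nonneg h0x] using h1
  have hgy : Summable (fun s : ℕ => ‖(4 * |y|) ^ (s + 1)‖) := by
    have h1 : Summable (fun s : ℕ => (4 * |y|) ^ (s + 1)) :=
      (summable_geometric_of_lt_one h0y (by linarith)).comp_injective (add_left_injective 1)
    simpa only [Real.norm_eq_abs, abs_pow, abs_of_nonneg h0y] using h1
  have hb : Summable (fun rs : ℕ × ℕ => (4 * |x|) ^ (rs.1 + 1) * (4 * |y|) ^ (rs.2 + 1)) :=
    summable_mul_of_summable_norm hgx hgy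
  have habs : Summable (fun rs : ℕ × ℕ => |F rs|) := by
    refine Summable.of_nonneg_of_le (fun _ => abs_nonneg _) (fun rs => ?_) hb
    have hFabs : |F rs| = (catalan (rs.1 + rs.2 + 1) : ℝ) * |x| ^ (rs.1 + 1) * |y| ^ (rs.2 + 1) := by
      rw [hF]
      simp only [abs_mul, abs_pow, abs_neg, abs_one, one_pow, one_mul, Nat.abs_cast]
    rw [hFabs]
    have hcb : (catalan (rs.1 + rs.2 + 1) : ℝ) ≤ 4 ^ (rs.1 + rs.2 + 2) := by
      have h1 : (catalan (rs.1 + rs.2 + 1) : ℝ) ≤ 4 ^ (rs.1 + rs.2 + 1) := by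
        exact_mod_cast Nat.cast_le.mpr (my_catalan_le_four_pow (rs.1 + rs.2 + 1))
      refine h1.trans ?_
      exact pow_le_pow_right₀ (by norm_num) (by omega)
    calc (catalan (rs.1 + rs.2 + 1) : ℝ) * |x| ^ (rs.1 + 1) * |y| ^ (rs.2 + 1)
        ≤ 4 ^ (rs.1 + rs.2 + 2) * |x| ^ (rs.1 + 1) * |y| ^ (rs.2 + 1) := by
          gcongr
      _ = (4 * |x|) ^ (rs.1 + 1) * (4 * |y|) ^ (rs.2 + 1) := by
          rw [mul_pow, mul_pow]
          have : (4:ℝ) ^ (rs.1 + rs.2 + 2) = 4 ^ (rs.1 + 1) * 4 ^ (rs.2 + 1) := by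
            rw [← pow_add]; ring_nf
          rw [this]; ring
  refine ⟨habs, ?_⟩
  have hsum : Summable F := habs.of_abs
  have hmx : |(-x)| < 1 / 4 := by rwa [abs_neg]
  have hmy : |(-y)| < 1 / 4 := by rwa [abs_neg]
  have hinner : ∀ n : ℕ, ∑ kl ∈ antidiagonal n, F kl
      = x * y / (x - y) *
        ((catalan (n + 1) : ℝ) * (-x) ^ (n + 1) - (catalan (n + 1) : ℝ) * (-y) ^ (n + 1)) := by
    intro n
    have h1 : ∀ kl ∈ antidiagonal n, F kl
        = (-1 : ℝ) ^ (n + 1) * (catalan (n + 1) : ℝ) * (x ^ (kl.1 + 1) * y ^ (kl.2 + 1)) := by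
      intro kl hkl
      rw [Finset.HasAntidiagonal.mem_antidiagonal] at hkl
      rw [hF]
      simp only
      rw [hkl]
      ring
    rw [Finset.sum_congr rfl h1, ← Finset.mul_sum]
    have h2 : ∑ kl ∈ antidiagonal n, x ^ (kl.1 + 1) * y ^ (kl.2 + 1)
        = x * y * ∑ i ∈ range (n + 1), x ^ i * y ^ (n - i) := by
      rw [Nat.sum_antidiagonal_eq_sum_range_succ (fun i j => x ^ (i + 1) * y ^ (j + 1)) n,
        Finset.mul_sum]
      refine Finset.sum_congr rfl fun i _ => ?_
      rw [pow_succ, pow_succ]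
      ring
    have hgeom : (∑ i ∈ range (n + 1), x ^ i * y ^ (n - i)) * (x - y)
        = x ^ (n + 1) - y ^ (n + 1) := by
      have h := geom_sum₂_mul x y (n + 1)
      simpa using h
    have h3 : ∑ i ∈ range (n + 1), x ^ i * y ^ (n - i)
        = (x ^ (n + 1) - y ^ (n + 1)) / (x - y) := by
      rw [eq_div_iff hxy']
      exact hgeom
    rw [h2, h3]
    have hnx : (-x : ℝ) ^ (n + 1) = (-1) ^ (n + 1) * x ^ (n + 1) := by
      rw [neg_pow]
    have hny : (-y : ℝ) ^ (n + 1) = (-1) ^ (n + 1) * y ^ (n + 1) := by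
      rw [neg_pow]
    rw [hnx, hny]
    field_simp
  rw [my_tsum_prod_eq F hsum, tsum_congr hinner, tsum_mul_left,
    Summable.tsum_sub (my_summable_shift hmx) (my_summable_shift hmy),
    my_tail_sum hmx, my_tail_sum hmy]
  have hsx : Real.sqrt (1 + 4 * x) = 1 + 2 * x * catGF (-x) := by
    have h := my_sqrt_eq hmx
    rw [show (1 - 4 * (-x)) = 1 + 4 * x by ring] at h
    rw [h]; ring
  have hsy : Real.sqrt (1 + 4 * y) = 1 + 2 * y * catGF (-y) := by
    have h := my_sqrt_eq hmy
    rw [show (1 - 4 * (-y)) = 1 + 4 * y by ring] at h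
    rw [h]; ring
  rw [hsx, hsy]
  field_simp
  ring
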